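/- Let q ≥ 2 be an integer such that there exists a projective plane of order q (a point–line incidence structure with q² + q + 1 points in which any two distinct points lie on exactly one line, any two distinct lines meet in exactly one point, every line contains q + 1 points, and every point lies on q + 1 lines). Then, with n = q² + q + 1, the complete graph K_n admits a connected and complete (⌈q/2⌉ · n)-edge-coloring. -/

import Mathlib

open Relation
open Relation

/-- the "class j" relation on `ZMod (2*t)` -/
def zrel (t j : ℕ) (a b : ZMod (2*t)) : Prop := a ≠ b ∧ (a + b).val / 2 = j

lemma zrel_symm {t j : ℕ} : Symmetric (zrel t j) := by
  intro a b ⟨h1, h2⟩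
  exact ⟨h1.symm, by rwa [add_comm]⟩

lemma zig_step {t : ℕ} (ht : 1 ≤ t) {j : ℕ} (hj : j < t) (x : ZMod (2*t)) :
    ReflTransGen (zrel t j) x (x + 1) := by
  haveI : NeZero (2*t) := ⟨by omega⟩
  have hval : ∀ k : ℕ, k < 2*t → ((k : ZMod (2*t))).val = k := fun k hk =>
    ZMod.val_cast_of_lt hk
  have key : ∀ a b : ZMod (2*t), (a + b = ((2*j : ℕ) : ZMod (2*t)) ∨
      a + b = ((2*j+1 : ℕ) : ZMod (2*t))) → (a + b).val / 2 = j := by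
    rintro a b (h | h) <;> rw [h, hval _ (by omega)] <;> omega
  have hone : (1 : ZMod (2*t)) ≠ 0 := by
    intro h
    have h1 : ((1 : ℕ) : ZMod (2*t)).val = 1 := hval 1 (by omega)
    rw [Nat.cast_one, h, ZMod.val_zero] at h1
    omega
  have hxsucc : x ≠ x + 1 := by
    intro h
    exact hone (by simpa using (left_eq_add.mp h))
  set J2 : ZMod (2*t) := ((2*j : ℕ) : ZMod (2*t)) with hJ2
  have hJsucc : J2 + 1 = ((2*j+1 : ℕ) : ZMod (2*t)) := by rw [hJ2]; push_cast; ring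
  by_cases hya : J2 - x = x
  · have hxx : x + x = J2 := by
      have := sub_eq_iff_eq_add.mp hya; rw [this]
    have hsum : x + (x + 1) = ((2*j+1 : ℕ) : ZMod (2*t)) := by
      rw [← add_assoc, hxx, hJsucc]
    exact ReflTransGen.single ⟨hxsucc, key _ _ (Or.inr hsum)⟩
  · by_cases hy1 : J2 - x = x + 1
    · have hsum : x + (x + 1) = J2 := by
        rw [← hy1, add_comm, sub_add_cancel]
      exact ReflTransGen.single ⟨hxsucc, key _ _ (Or.inl hsum)⟩
    · have e1 : zrel t j x (J2 - x) := by
        refine ⟨fun h => hya h.symm, key _ _ (Or.inl ?_)⟩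
        rw [add_comm, sub_add_cancel]
      have e2 : zrel t j (J2 - x) (x + 1) := by
        refine ⟨hy1, key _ _ (Or.inr ?_)⟩
        rw [← add_assoc, sub_add_cancel, hJsucc]
      exact ReflTransGen.head e1 (ReflTransGen.single e2)

lemma zig_conn {t : ℕ} (ht : 1 ≤ t) {j : ℕ} (hj : j < t) (x y : ZMod (2*t)) :
    ReflTransGen (zrel t j) x y := by
  haveI : NeZero (2*t) := ⟨by omega⟩
  have main : ∀ (k : ℕ) (x : ZMod (2*t)), ReflTransGen (zrel t j) x (x + (k : ZMod (2*t))) := by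
    intro k
    induction k with
    | zero => intro x; simpa using ReflTransGen.refl
    | succ k ih =>
      intro x
      have hcast : (((k+1 : ℕ)) : ZMod (2*t)) = (k : ZMod (2*t)) + 1 := by push_cast; ring
      rw [hcast, ← add_assoc]
      exact (ih x).trans (zig_step ht hj _)
  have h2 := main (y - x).val x
  rwa [ZMod.natCast_rightInverse (y - x), add_comm, sub_add_cancel] at h2

lemma zmod_span {T : ℕ} (hT : 1 ≤ T) {j : ℕ} (hj : j < T) (a : ZMod (2*T)) :
    ∃ b, b ≠ a ∧ (a + b).val / 2 = j := by
  haveI : NeZero (2*T) := ⟨by omega⟩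
  have hkey : a + (((2*j+1 : ℕ) : ZMod (2*T)) - a) = ((2*j+1 : ℕ) : ZMod (2*T)) := by ring
  refine ⟨((2*j+1 : ℕ) : ZMod (2*T)) - a, ?_, ?_⟩
  · intro h
    have hzx : a + a = ((2*j+1 : ℕ) : ZMod (2*T)) := by rw [← sub_eq_iff_eq_add.mp h]
    have h2 : (a.val + a.val) % (2*T) = (2*j+1) % (2*T) := by
      have := congrArg ZMod.val hzx
      rwa [show a + a = ((a.val + a.val : ℕ) : ZMod (2*T)) by
        push_cast [ZMod.natCast_rightInverse a]; ring, ZMod.val_natCast,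
        ZMod.val_natCast] at this
    have h3 : (2*j+1) % (2*T) = 2*j+1 := Nat.mod_eq_of_lt (by omega)
    have hdvd : 2 ∣ (a.val + a.val) % (2*T) :=
      (Nat.dvd_mod_iff ⟨T, rfl⟩).mpr ⟨a.val, by ring⟩
    omega
  · rw [hkey, ZMod.val_natCast]
    have h3 : (2*j+1) % (2*T) = 2*j+1 := Nat.mod_eq_of_lt (by omega)
    omega

lemma psi_step {T m : ℕ} (hT : 1 ≤ T) (g : Fin m → Fin m → Fin T)
    (ψ : ZMod (2*T) → Fin m) (hψ : ∀ z, (ψ z).val = z.val)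
    (hg : ∀ a b : ZMod (2*T), (g (ψ a) (ψ b)).val = (a + b).val / 2)
    (j : Fin T) {a b : ZMod (2*T)} (h : zrel T j.val a b) :
    ψ a ≠ ψ b ∧ g (ψ a) (ψ b) = j := by
  haveI : NeZero (2*T) := ⟨by omega⟩
  obtain ⟨h1, h2⟩ := h
  constructor
  · intro h
    apply h1
    have hv : a.val = b.val := by rw [← hψ a, ← hψ b, h]
    rw [← ZMod.natCast_rightInverse a, ← ZMod.natCast_rightInverse b, hv]
  · exact Fin.ext (by rw [hg]; exact h2)

lemma psi_conn {T m : ℕ} (hT : 1 ≤ T) (g : Fin m → Fin m → Fin T)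
    (ψ : ZMod (2*T) → Fin m) (hψ : ∀ z, (ψ z).val = z.val)
    (hg : ∀ a b : ZMod (2*T), (g (ψ a) (ψ b)).val = (a + b).val / 2)
    (j : Fin T) (a b : ZMod (2*T)) :
    ReflTransGen (fun u v : Fin m => u ≠ v ∧ g u v = j) (ψ a) (ψ b) :=
  ReflTransGen.lift (p := fun u v : Fin m => u ≠ v ∧ g u v = j) ψ (fun _ _ h => psi_step hT g ψ hψ hg j h) _ _ (zig_conn hT j.isLt a b)

lemma psi_span {T m : ℕ} (hT : 1 ≤ T) (g : Fin m → Fin m → Fin T)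
    (ψ : ZMod (2*T) → Fin m) (hψ : ∀ z, (ψ z).val = z.val)
    (hg : ∀ a b : ZMod (2*T), (g (ψ a) (ψ b)).val = (a + b).val / 2)
    (j : Fin T) (x : Fin m) (hx : x.val < 2*T) :
    ∃ y, y ≠ x ∧ g x y = j := by
  haveI : NeZero (2*T) := ⟨by omega⟩
  have hxψ : x = ψ ((x.val : ℕ) : ZMod (2*T)) := by
    apply Fin.ext
    rw [hψ, ZMod.val_natCast, Nat.mod_eq_of_lt hx]
  obtain ⟨b, hb1, hb2⟩ := zmod_span hT j.isLt ((x.val : ℕ) : ZMod (2*T))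
  refine ⟨ψ b, ?_, ?_⟩
  · rw [hxψ]
    intro h
    apply hb1
    have hv : b.val = (((x.val : ℕ) : ZMod (2*T))).val := by rw [← hψ b, h, hψ]
    rw [← ZMod.natCast_rightInverse b, hv, ZMod.natCast_rightInverse]
  · rw [hxψ]
    exact Fin.ext (by rw [hg]; exact hb2)

def gB (t : ℕ) (ht : 1 ≤ t) (x y : Fin (t+t+1)) : Fin t :=
  if x.val = t+t then ⟨y.val % t, Nat.mod_lt _ (by omega)⟩
  else if y.val = t+t then ⟨x.val % t, Nat.mod_lt _ (by omega)⟩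
  else ⟨((x.val + y.val : ℕ) : ZMod (2*t)).val / 2, by
    haveI : NeZero (2*t) := ⟨by omega⟩
    have := ZMod.val_lt ((x.val + y.val : ℕ) : ZMod (2*t)); omega⟩

lemma gB_symm (t : ℕ) (ht : 1 ≤ t) (x y : Fin (t+t+1)) : gB t ht x y = gB t ht y x := by
  unfold gB
  split_ifs with h1 h2 h3
  · exact Fin.ext (by simp [h1, h2])
  · rfl
  · rfl
  · exact Fin.ext (by simp [Nat.add_comm])

def ψB (t : ℕ) (ht : 1 ≤ t) (z : ZMod (2*t)) : Fin (t+t+1) :=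
  ⟨z.val, by haveI : NeZero (2*t) := ⟨by omega⟩; have := ZMod.val_lt z; omega⟩

lemma hψB (t : ℕ) (ht : 1 ≤ t) (z : ZMod (2*t)) : (ψB t ht z).val = z.val := rfl

lemma hgB (t : ℕ) (ht : 1 ≤ t) (a b : ZMod (2*t)) :
    (gB t ht (ψB t ht a) (ψB t ht b)).val = (a + b).val / 2 := by
  haveI : NeZero (2*t) := ⟨by omega⟩
  have ha := ZMod.val_lt a
  have hb := ZMod.val_lt b
  unfold gB
  rw [if_neg (by rw [hψB]; omega), if_neg (by rw [hψB]; omega)]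
  simp only [hψB]
  rw [show ((a.val + b.val : ℕ) : ZMod (2*t)) = a + b by
    rw [Nat.cast_add, ZMod.natCast_rightInverse, ZMod.natCast_rightInverse]]

lemma caseB (t : ℕ) (ht : 1 ≤ t) :
    ∃ g : Fin (t+t+1) → Fin (t+t+1) → Fin t,
      (∀ x y, g x y = g y x) ∧
      (∀ (j : Fin t) (x : Fin (t+t+1)), ∃ y, y ≠ x ∧ g x y = j) ∧
      (∀ (j : Fin t) (x y : Fin (t+t+1)),
        Relation.ReflTransGen (fun a b => a ≠ b ∧ g a b = j) x y) := by
  haveI : NeZero (2*t) := ⟨by omega⟩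
  have hg2t : 2*t ≤ t+t+1 := by omega
  refine ⟨gB t ht, gB_symm t ht, ?_, ?_⟩
  · intro j x
    by_cases hx : x.val = t+t
    · refine ⟨⟨j.val, by have := j.isLt; omega⟩, ?_, ?_⟩
      · intro h
        have := congrArg Fin.val h
        simp only [hx] at this
        have := j.isLt; omega
      · unfold gB
        rw [if_pos hx]
        exact Fin.ext (Nat.mod_eq_of_lt j.isLt)
    · exact psi_span ht (gB t ht) (ψB t ht) (hψB t ht) (hgB t ht) j x (by have := x.isLt; omega)
  · intro j x y
    have relsymm : Symmetric (fun a b : Fin (t+t+1) => a ≠ b ∧ gB t ht a b = j) := by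
      intro a b ⟨h1, h2⟩
      exact ⟨h1.symm, by rw [gB_symm]; exact h2⟩
    have hub : ∀ a : Fin (t+t+1),
        ReflTransGen (fun a b : Fin (t+t+1) => a ≠ b ∧ gB t ht a b = j) ⟨t+t, by omega⟩ a := by
      intro a
      by_cases ha : a.val = t+t
      · have : a = ⟨t+t, by omega⟩ := Fin.ext (by rw [ha])
        rw [this]
      · have ha' : a = ψB t ht ((a.val : ℕ) : ZMod (2*t)) := by
          apply Fin.ext
          rw [hψB, ZMod.val_natCast, Nat.mod_eq_of_lt (by have := a.isLt; omega)]
        have e2 : (⟨j.val, by have := j.isLt; omega⟩ : Fin (t+t+1))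
            = ψB t ht ((j.val : ℕ) : ZMod (2*t)) := by
          apply Fin.ext
          simp only [hψB, ZMod.val_natCast]
          exact (Nat.mod_eq_of_lt (by have := j.isLt; omega)).symm
        have e1 : (fun a b : Fin (t+t+1) => a ≠ b ∧ gB t ht a b = j)
            ⟨t+t, by omega⟩ ⟨j.val, by have := j.isLt; omega⟩ := by
          constructor
          · intro h
            have := congrArg Fin.val h
            simp only [] at this
            have := j.isLt; omega
          · unfold gB
            rw [if_pos rfl]
            exact Fin.ext (Nat.mod_eq_of_lt j.isLt)
        refine ReflTransGen.head e1 ?_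
        rw [e2, ha']
        exact psi_conn ht (gB t ht) (ψB t ht) (hψB t ht) (hgB t ht) j _ _
    exact ((haveI : Std.Symm (fun a b : Fin (t+t+1) => a ≠ b ∧ gB t ht a b = j) := ⟨fun _ _ h => relsymm h⟩; ReflTransGen.symmetric).symm _ _ (hub x)).trans (hub y)

def gA (s : ℕ) (x y : Fin (2*s+1+1)) : Fin (s+1) :=
  ⟨((x.val + y.val : ℕ) : ZMod (2*(s+1))).val / 2, by
    haveI : NeZero (2*(s+1)) := ⟨by omega⟩
    have := ZMod.val_lt ((x.val + y.val : ℕ) : ZMod (2*(s+1))); omega⟩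

lemma gA_symm (s : ℕ) (x y : Fin (2*s+1+1)) : gA s x y = gA s y x := by
  unfold gA
  exact Fin.ext (by simp [Nat.add_comm])

def ψA (s : ℕ) (z : ZMod (2*(s+1))) : Fin (2*s+1+1) :=
  ⟨z.val, by haveI : NeZero (2*(s+1)) := ⟨by omega⟩; have := ZMod.val_lt z; omega⟩

lemma hψA (s : ℕ) (z : ZMod (2*(s+1))) : (ψA s z).val = z.val := rfl

lemma hgA (s : ℕ) (a b : ZMod (2*(s+1))) :
    (gA s (ψA s a) (ψA s b)).val = (a + b).val / 2 := by
  haveI : NeZero (2*(s+1)) := ⟨by omega⟩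
  unfold gA
  simp only [hψA]
  rw [show ((a.val + b.val : ℕ) : ZMod (2*(s+1))) = a + b by
    rw [Nat.cast_add, ZMod.natCast_rightInverse, ZMod.natCast_rightInverse]]

lemma caseA (s : ℕ) :
    ∃ g : Fin (2*s+1+1) → Fin (2*s+1+1) → Fin (s+1),
      (∀ x y, g x y = g y x) ∧
      (∀ (j : Fin (s+1)) (x : Fin (2*s+1+1)), ∃ y, y ≠ x ∧ g x y = j) ∧
      (∀ (j : Fin (s+1)) (x y : Fin (2*s+1+1)),
        Relation.ReflTransGen (fun a b => a ≠ b ∧ g a b = j) x y) := by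
  haveI : NeZero (2*(s+1)) := ⟨by omega⟩
  have hT : 1 ≤ s+1 := by omega
  refine ⟨gA s, gA_symm s, ?_, ?_⟩
  · intro j x
    exact psi_span hT (gA s) (ψA s) (hψA s) (hgA s) j x (by have := x.isLt; omega)
  · intro j x y
    have hx : x = ψA s ((x.val : ℕ) : ZMod (2*(s+1))) := by
      apply Fin.ext
      simp only [hψA, ZMod.val_natCast]
      exact (Nat.mod_eq_of_lt (by have := x.isLt; omega)).symm
    have hy : y = ψA s ((y.val : ℕ) : ZMod (2*(s+1))) := by
      apply Fin.ext
      simp only [hψA, ZMod.val_natCast]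
      exact (Nat.mod_eq_of_lt (by have := y.isLt; omega)).symm
    rw [hx, hy]
    exact psi_conn hT (gA s) (ψA s) (hψA s) (hgA s) j _ _

lemma local_coloring (q t : ℕ) (hq : 2 ≤ q) (ht : t = (q+1)/2) :
    ∃ g : Fin (q+1) → Fin (q+1) → Fin t,
      (∀ x y, g x y = g y x) ∧
      (∀ (j : Fin t) (x : Fin (q+1)), ∃ y, y ≠ x ∧ g x y = j) ∧
      (∀ (j : Fin t) (x y : Fin (q+1)),
        Relation.ReflTransGen (fun a b => a ≠ b ∧ g a b = j) x y) := by
  rcases Nat.even_or_odd q with ⟨r, hr⟩ | ⟨r, hr⟩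
  · subst hr
    have htr : t = r := by omega
    subst htr
    exact caseB t (by omega)
  · subst hr
    have htr : t = r + 1 := by omega
    subst htr
    exact caseA r

lemma card_eq_of_regular {P L : Type*} [Fintype P] [Fintype L] (I : P → L → Prop) (q : ℕ)
    (hline : ∀ l, {p : P | I p l}.ncard = q+1) (hdeg : ∀ p, {l : L | I p l}.ncard = q+1) :
    Fintype.card L = Fintype.card P := by
  classical
  have h1 : ∀ l : L, (Finset.univ.filter fun p : P => I p l).card = q+1 := by
    intro l
    have := hline l
    rwa [Set.ncard_eq_toFinset_card', Set.toFinset_setOf] at this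
  have h2 : ∀ p : P, (Finset.univ.filter fun l : L => I p l).card = q+1 := by
    intro p
    have := hdeg p
    rwa [Set.ncard_eq_toFinset_card', Set.toFinset_setOf] at this
  have key : ∑ l : L, (Finset.univ.filter fun p : P => I p l).card
      = ∑ p : P, (Finset.univ.filter fun l : L => I p l).card := by
    simp only [Finset.card_filter]
    rw [Finset.sum_comm]
  rw [Finset.sum_const_nat (fun l _ => h1 l), Finset.sum_const_nat (fun p _ => h2 p)] at key
  simp only [Finset.card_univ] at key
  exact Nat.eq_of_mul_eq_mul_right (by omega) key

lemma card_line_subtype {P : Type*} (s : Set P) [Fintype s] (q : ℕ) (h : s.ncard = q+1) :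
    Fintype.card s = q+1 := by
  rw [← Set.toFinset_card, ← Set.ncard_eq_toFinset_card', h]

section PlaneDefs

variable {P L : Type*} (I : P → L → Prop)

open Classical in
noncomputable def lineOf [Nonempty L]
    (hpoints : ∀ p p' : P, p ≠ p' → ∃! l : L, I p l ∧ I p' l) (a b : P) : L :=
  if h : a ≠ b then ((hpoints a b h).exists).choose else Classical.arbitrary L

variable [Nonempty L] (hpoints : ∀ p p' : P, p ≠ p' → ∃! l : L, I p l ∧ I p' l)

lemma lineOf_mem1 {a b : P} (h : a ≠ b) : I a (lineOf I hpoints a b) := by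
  unfold lineOf
  rw [dif_pos h]
  exact ((hpoints a b h).exists).choose_spec.1

lemma lineOf_mem2 {a b : P} (h : a ≠ b) : I b (lineOf I hpoints a b) := by
  unfold lineOf
  rw [dif_pos h]
  exact ((hpoints a b h).exists).choose_spec.2

lemma lineOf_eq {a b : P} (h : a ≠ b) (l : L) (h1 : I a l) (h2 : I b l) :
    lineOf I hpoints a b = l := by
  unfold lineOf
  rw [dif_pos h]
  exact (hpoints a b h).unique ((hpoints a b h).exists.choose_spec) ⟨h1, h2⟩

lemma lineOf_symm {a b : P} (h : a ≠ b) :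
    lineOf I hpoints a b = lineOf I hpoints b a :=
  lineOf_eq I hpoints h _ (lineOf_mem2 I hpoints h.symm) (lineOf_mem1 I hpoints h.symm)

open Classical in
noncomputable def coordOf (q : ℕ) (e : ∀ l : L, {p : P // I p l} ≃ Fin (q+1))
    (l : L) (p : P) : Fin (q+1) :=
  if h : I p l then e l ⟨p, h⟩ else ⟨0, by omega⟩

lemma coordOf_spec (q : ℕ) (e : ∀ l : L, {p : P // I p l} ≃ Fin (q+1))
    {l : L} {p : P} (h : I p l) : coordOf I q e l p = e l ⟨p, h⟩ := dif_pos h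

noncomputable def ptOf (q : ℕ) (e : ∀ l : L, {p : P // I p l} ≃ Fin (q+1))
    (l : L) (x : Fin (q+1)) : P := ((e l).symm x).1

lemma ptOf_mem (q : ℕ) (e : ∀ l : L, {p : P // I p l} ≃ Fin (q+1))
    (l : L) (x : Fin (q+1)) : I (ptOf I q e l x) l := ((e l).symm x).2

lemma coordOf_ptOf (q : ℕ) (e : ∀ l : L, {p : P // I p l} ≃ Fin (q+1))
    (l : L) (x : Fin (q+1)) : coordOf I q e l (ptOf I q e l x) = x := by
  rw [coordOf_spec I q e (ptOf_mem I q e l x)]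
  have : (⟨ptOf I q e l x, ptOf_mem I q e l x⟩ : {p : P // I p l}) = (e l).symm x :=
    Subtype.ext rfl
  rw [this, Equiv.apply_symm_apply]

lemma ptOf_coordOf (q : ℕ) (e : ∀ l : L, {p : P // I p l} ≃ Fin (q+1))
    {l : L} {p : P} (h : I p l) : ptOf I q e l (coordOf I q e l p) = p := by
  rw [coordOf_spec I q e h]
  unfold ptOf
  rw [Equiv.symm_apply_apply]

end PlaneDefs

section Global

variable {P L : Type*} (I : P → L → Prop) [Nonempty L]
  (hpoints : ∀ p p' : P, p ≠ p' → ∃! l : L, I p l ∧ I p' l)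
  (q n : ℕ) (e : ∀ l : L, {p : P // I p l} ≃ Fin (q+1))
  (eP : Fin n ≃ P) (eL : L ≃ Fin n)
  (g : Fin (q+1) → Fin (q+1) → Fin ((q+1)/2))
  (hpos : 0 < (q+1)/2 * n)

open Classical in
noncomputable def gc (a b : Fin n) : Fin ((q+1)/2 * n) :=
  if eP a = eP b then ⟨0, hpos⟩
  else finProdFinEquiv
    (g (coordOf I q e (lineOf I hpoints (eP a) (eP b)) (eP a))
       (coordOf I q e (lineOf I hpoints (eP a) (eP b)) (eP b)),
     eL (lineOf I hpoints (eP a) (eP b)))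

lemma gc_symm (hgsymm : ∀ x y, g x y = g y x) (a b : Fin n) :
    gc I hpoints q n e eP eL g hpos a b = gc I hpoints q n e eP eL g hpos b a := by
  unfold gc
  by_cases h : eP a = eP b
  · rw [if_pos h, if_pos h.symm]
  · rw [if_neg h, if_neg (Ne.symm h), ← lineOf_symm I hpoints h, hgsymm]

lemma gc_val {a b : Fin n} (h : eP a ≠ eP b) (l : L) (h1 : I (eP a) l) (h2 : I (eP b) l) :
    gc I hpoints q n e eP eL g hpos a b
      = finProdFinEquiv (g (coordOf I q e l (eP a)) (coordOf I q e l (eP b)), eL l) := by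
  unfold gc
  rw [if_neg h, lineOf_eq I hpoints h l h1 h2]

lemma gc_edge (hgspan : ∀ (j : Fin ((q+1)/2)) (x : Fin (q+1)), ∃ y, y ≠ x ∧ g x y = j)
    (l : L) (j : Fin ((q+1)/2)) (a : Fin n) (hp : I (eP a) l) :
    ∃ b : Fin n, a ≠ b ∧
      gc I hpoints q n e eP eL g hpos a b = finProdFinEquiv (j, eL l) := by
  obtain ⟨y, hy1, hy2⟩ := hgspan j (coordOf I q e l (eP a))
  have hbl : I (ptOf I q e l y) l := ptOf_mem I q e l y
  have hne : eP a ≠ ptOf I q e l y := by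
    intro hc
    apply hy1
    rw [← coordOf_ptOf I q e l y, ← hc]
  refine ⟨eP.symm (ptOf I q e l y), ?_, ?_⟩
  · intro hc
    apply hne
    have := congrArg eP hc
    rwa [Equiv.apply_symm_apply] at this
  · have hB : eP (eP.symm (ptOf I q e l y)) = ptOf I q e l y := Equiv.apply_symm_apply _ _
    rw [gc_val I hpoints q n e eP eL g hpos (by rw [hB]; exact hne) l hp (by rw [hB]; exact hbl)]
    rw [show coordOf I q e l (eP (eP.symm (ptOf I q e l y))) = y by rw [hB, coordOf_ptOf], hy2]

lemma gc_line {a b : Fin n} (hab : a ≠ b) (j : Fin ((q+1)/2)) (y0 : Fin n)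
    (hc : gc I hpoints q n e eP eL g hpos a b = finProdFinEquiv (j, y0)) :
    lineOf I hpoints (eP a) (eP b) = eL.symm y0 ∧
      g (coordOf I q e (lineOf I hpoints (eP a) (eP b)) (eP a))
        (coordOf I q e (lineOf I hpoints (eP a) (eP b)) (eP b)) = j := by
  unfold gc at hc
  rw [if_neg (fun h => hab (eP.injective h))] at hc
  have h2 := finProdFinEquiv.injective hc
  rw [Prod.mk.injEq] at h2
  refine ⟨?_, h2.1⟩
  rw [← h2.2, Equiv.symm_apply_apply]

end Global

open SimpleGraph

/-- The subgraph of `G` formed by the edges of color `i`. -/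
def colorClassSubgraph {V : Type*} {k : ℕ} (G : SimpleGraph V) (c : Sym2 V → Fin k)
    (i : Fin k) : G.Subgraph where
  verts := {v | ∃ w, G.Adj v w ∧ c s(v, w) = i}
  Adj v w := G.Adj v w ∧ c s(v, w) = i
  adj_sub h := h.1
  edge_vert h := ⟨_, h⟩
  symm := by
    constructor
    intro v w h
    exact ⟨h.1.symm, by rw [Sym2.eq_swap]; exact h.2⟩

/-- `c` is a complete edge-coloring of `G` with `k` colors: every color is used on some
edge, and every two distinct colors appear on a pair of edges sharing a vertex. -/
def IsCompleteEdgeColoring {V : Type*} {k : ℕ} (G : SimpleGraph V)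
    (c : Sym2 V → Fin k) : Prop :=
  (∀ i : Fin k, ∃ e ∈ G.edgeSet, c e = i) ∧
  ∀ i j : Fin k, i ≠ j →
    ∃ u v w : V, G.Adj u v ∧ G.Adj u w ∧ c s(u, v) = i ∧ c s(u, w) = j

/-- `c` is a connected edge-coloring: each color class induces a connected subgraph. -/
def IsConnectedEdgeColoring {V : Type*} {k : ℕ} (G : SimpleGraph V)
    (c : Sym2 V → Fin k) : Prop :=
  ∀ i : Fin k, (colorClassSubgraph G c i).Connected


theorem connected_complete_coloring_of_projective_plane
    (q : ℕ) (hq : 2 ≤ q)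
    (P L : Type*) [Fintype P] [Fintype L] (I : P → L → Prop)
    (hP : Fintype.card P = q ^ 2 + q + 1)
    (hpoints : ∀ p p' : P, p ≠ p' → ∃! l : L, I p l ∧ I p' l)
    (hlines : ∀ l l' : L, l ≠ l' → ∃! p : P, I p l ∧ I p l')
    (hline_size : ∀ l : L, {p : P | I p l}.ncard = q + 1)
    (hpoint_deg : ∀ p : P, {l : L | I p l}.ncard = q + 1)
    (n : ℕ) (hn : n = q ^ 2 + q + 1) :
    ∃ c : Sym2 (Fin n) → Fin ((q + 1) / 2 * n),
      IsCompleteEdgeColoring (⊤ : SimpleGraph (Fin n)) c ∧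
        IsConnectedEdgeColoring (⊤ : SimpleGraph (Fin n)) c := by
  classical
  have hqq : 2*2 ≤ q*q := Nat.mul_le_mul hq hq
  have hn7 : 7 ≤ n := by rw [hn, pow_two]; omega
  have hnpos : 0 < n := by omega
  have htpos : 0 < (q+1)/2 := by omega
  have hpos : 0 < (q+1)/2 * n := Nat.mul_pos htpos hnpos
  have hPn : Fintype.card P = n := by rw [hP, hn]
  have hLn : Fintype.card L = n := by
    rw [card_eq_of_regular I q hline_size hpoint_deg, hPn]
  haveI : Nonempty L := by
    rw [← Fintype.card_pos_iff, hLn]; omega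
  set eP : Fin n ≃ P := (Fintype.equivFinOfCardEq hPn).symm with heP
  set eL : L ≃ Fin n := Fintype.equivFinOfCardEq hLn with heL
  set e : ∀ l : L, {p : P // I p l} ≃ Fin (q+1) := fun l =>
    Fintype.equivFinOfCardEq (card_line_subtype {p : P | I p l} q (hline_size l)) with he
  obtain ⟨g, hgsymm, hgspan, hgconn⟩ := local_coloring q ((q+1)/2) hq rfl
  set f : Fin n → Fin n → Fin ((q+1)/2 * n) := gc I hpoints q n e eP eL g hpos with hf
  have fsymm : ∀ a b, f a b = f b a := gc_symm I hpoints q n e eP eL g hpos hgsymm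
  set c : Sym2 (Fin n) → Fin ((q+1)/2 * n) := Sym2.lift ⟨f, fsymm⟩ with hc
  -- decompose any color
  have hdecomp : ∀ i : Fin ((q+1)/2 * n), ∃ (j : Fin ((q+1)/2)) (y0 : Fin n),
      finProdFinEquiv (j, y0) = i :=
    fun i => by
      obtain ⟨⟨j, y0⟩, hp⟩ := finProdFinEquiv.surjective i
      exact ⟨j, y0, hp⟩
  -- an edge of any color at any point of the corresponding line
  have hedge : ∀ (l : L) (j : Fin ((q+1)/2)) (a : Fin n), I (eP a) l →
      ∃ b : Fin n, a ≠ b ∧ c s(a, b) = finProdFinEquiv (j, eL l) := by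
    intro l j a hp
    obtain ⟨b, hab, hcol⟩ := gc_edge I hpoints q n e eP eL g hpos hgspan l j a hp
    exact ⟨b, hab, by rw [hc, Sym2.lift_mk]; exact hcol⟩
  have hpt : ∀ l : L, ∃ p : P, I p l :=
    fun l => ⟨ptOf I q e l ⟨0, by omega⟩, ptOf_mem I q e l _⟩
  refine ⟨c, ⟨?_, ?_⟩, ?_⟩
  · -- every color used
    intro i
    obtain ⟨j, y0, hjy⟩ := hdecomp i
    obtain ⟨p, hp⟩ := hpt (eL.symm y0)
    have hpa : I (eP (eP.symm p)) (eL.symm y0) := by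
      rw [Equiv.apply_symm_apply]; exact hp
    obtain ⟨b, hab, hcol⟩ := hedge (eL.symm y0) j (eP.symm p) hpa
    refine ⟨s(eP.symm p, b), ?_, ?_⟩
    · rw [SimpleGraph.mem_edgeSet, SimpleGraph.top_adj]; exact hab
    · rw [hcol, Equiv.apply_symm_apply, hjy]
  · -- completeness
    intro i i' hii'
    obtain ⟨j, y0, hjy⟩ := hdecomp i
    obtain ⟨j', y0', hjy'⟩ := hdecomp i'
    have hcommon : ∃ p : P, I p (eL.symm y0) ∧ I p (eL.symm y0') := by
      by_cases hl : eL.symm y0 = eL.symm y0'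
      · obtain ⟨p, hp⟩ := hpt (eL.symm y0)
        exact ⟨p, hp, hl ▸ hp⟩
      · exact (hlines _ _ hl).exists
    obtain ⟨p, hpl, hpl'⟩ := hcommon
    have hpa : I (eP (eP.symm p)) (eL.symm y0) := by
      rw [Equiv.apply_symm_apply]; exact hpl
    have hpa' : I (eP (eP.symm p)) (eL.symm y0') := by
      rw [Equiv.apply_symm_apply]; exact hpl'
    obtain ⟨v, hav, hcv⟩ := hedge (eL.symm y0) j (eP.symm p) hpa
    obtain ⟨w, haw, hcw⟩ := hedge (eL.symm y0') j' (eP.symm p) hpa'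
    refine ⟨eP.symm p, v, w, (SimpleGraph.top_adj _ _).mpr hav, (SimpleGraph.top_adj _ _).mpr haw, ?_, ?_⟩
    · rw [hcv, Equiv.apply_symm_apply, hjy]
    · rw [hcw, Equiv.apply_symm_apply, hjy']
  · -- connectivity
    intro i
    obtain ⟨j, y0, hjy⟩ := hdecomp i
    set l : L := eL.symm y0 with hl
    have hly : eL l = y0 := Equiv.apply_symm_apply _ _
    set H := colorClassSubgraph (⊤ : SimpleGraph (Fin n)) c i with hH
    have hmem : ∀ p : P, I p l → (eP.symm p) ∈ H.verts := by
      intro p hp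
      have hpa : I (eP (eP.symm p)) l := by
        rw [Equiv.apply_symm_apply]; exact hp
      obtain ⟨b, hab, hcol⟩ := hedge l j (eP.symm p) hpa
      show ∃ w, (⊤ : SimpleGraph (Fin n)).Adj (eP.symm p) w ∧ c s(eP.symm p, w) = i
      exact ⟨b, (SimpleGraph.top_adj _ _).mpr hab, by rw [hcol, hly, hjy]⟩
    have hline_of_mem : ∀ v, v ∈ H.verts → I (eP v) l := by
      rintro v (⟨w, hadj, hcol⟩ : ∃ w, (⊤ : SimpleGraph (Fin n)).Adj v w ∧ c s(v, w) = i)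
      have hvw : v ≠ w := hadj.ne
      rw [hc, Sym2.lift_mk] at hcol
      have hcol' : gc I hpoints q n e eP eL g hpos v w = finProdFinEquiv (j, y0) := by
        rw [hjy]; exact hcol
      have := gc_line I hpoints q n e eP eL g hpos hvw j y0 hcol'
      rw [hl, ← this.1]
      exact lineOf_mem1 I hpoints (fun hh => hvw (eP.injective hh))
    rw [SimpleGraph.Subgraph.connected_iff]
    constructor
    · -- preconnected
      constructor
      rintro ⟨v, hv⟩ ⟨w, hw⟩
      have hvl := hline_of_mem v hv
      have hwl := hline_of_mem w hw
      set Φ : Fin (q+1) → H.verts := fun x =>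
        ⟨eP.symm (ptOf I q e l x), hmem _ (ptOf_mem I q e l x)⟩ with hΦ
      have step : ∀ x y : Fin (q+1), (x ≠ y ∧ g x y = j) → H.coe.Adj (Φ x) (Φ y) := by
        rintro x y ⟨hxy, hgxy⟩
        have hne_pts : ptOf I q e l x ≠ ptOf I q e l y := by
          intro hcc
          apply hxy
          rw [← coordOf_ptOf I q e l x, hcc, coordOf_ptOf]
        have hne : eP.symm (ptOf I q e l x) ≠ eP.symm (ptOf I q e l y) :=
          fun hcc => hne_pts (eP.symm.injective hcc)
        rw [SimpleGraph.Subgraph.coe_adj]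
        show (⊤ : SimpleGraph (Fin n)).Adj (Φ x).1 (Φ y).1 ∧ c s((Φ x).1, (Φ y).1) = i
        refine ⟨(SimpleGraph.top_adj _ _).mpr hne, ?_⟩
        rw [hc, Sym2.lift_mk]
        show gc I hpoints q n e eP eL g hpos
          (eP.symm (ptOf I q e l x)) (eP.symm (ptOf I q e l y)) = i
        rw [gc_val I hpoints q n e eP eL g hpos
          (by rw [Equiv.apply_symm_apply, Equiv.apply_symm_apply]; exact hne_pts) l
          (by rw [Equiv.apply_symm_apply]; exact ptOf_mem I q e l x)
          (by rw [Equiv.apply_symm_apply]; exact ptOf_mem I q e l y)]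
        rw [show coordOf I q e l (eP (eP.symm (ptOf I q e l x))) = x by
            rw [Equiv.apply_symm_apply, coordOf_ptOf],
          show coordOf I q e l (eP (eP.symm (ptOf I q e l y))) = y by
            rw [Equiv.apply_symm_apply, coordOf_ptOf],
          hgxy, hly, hjy]
      have reach : ∀ x y : Fin (q+1),
          Relation.ReflTransGen (fun a b => a ≠ b ∧ g a b = j) x y →
          H.coe.Reachable (Φ x) (Φ y) := by
        intro x y h
        induction h with
        | refl => exact SimpleGraph.Reachable.refl _
        | tail _ hstep ih => exact ih.trans (step _ _ hstep).reachable
      have hΦv : Φ (coordOf I q e l (eP v)) = ⟨v, hv⟩ := by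
        apply Subtype.ext
        show eP.symm (ptOf I q e l (coordOf I q e l (eP v))) = v
        rw [ptOf_coordOf I q e hvl, Equiv.symm_apply_apply]
      have hΦw : Φ (coordOf I q e l (eP w)) = ⟨w, hw⟩ := by
        apply Subtype.ext
        show eP.symm (ptOf I q e l (coordOf I q e l (eP w))) = w
        rw [ptOf_coordOf I q e hwl, Equiv.symm_apply_apply]
      rw [← hΦv, ← hΦw]
      exact reach _ _ (hgconn j _ _)
    · -- nonempty
      obtain ⟨p, hp⟩ := hpt l
      exact ⟨eP.symm p, hmem p hp⟩
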